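/- Assume the loop is universally almost surely terminating (P_s(τ < ∞) = 1 for every s). Then for all expectations f and I, the following are equivalent: (i) the pointwise limit lim_{n→∞} Φ_fⁿ(I) exists and equals lfp Φ_f (I is uniformly integrable for f); (ii) for every initial state s, lim_{n→∞} ∫_Ω X_n^{f,I} dP_s exists and equals ∫_Ω X_τ^f dP_s (the induced stochastic process is uniformly integrable, i.e., expectation and almost-sure limit commute). -/

import Mathlib

open MeasureTheory hiding uniformIntegrable_iff
open Filter Topology
open scoped Classical ENNReal ENat NNReal

/-! Loop model: states `S`, guard `φ : Set S`, loop-body transition probabilities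
`μ : S → S → ℝ≥0`. Expectations are functions `S → ℝ≥0∞` with the pointwise order. -/

variable {S : Type*}

/-- One-step weakest preexpectation of the loop body:
`wpF μ X s = ∑_{s'} μ s s' * X s'`. -/
noncomputable def wpF (μ : S → S → ℝ≥0) (X : S → ℝ≥0∞) (s : S) : ℝ≥0∞ :=
  ∑' s', (μ s s' : ℝ≥0∞) * X s'

/-- The characteristic function `Φ_f` of the loop `while φ do C` with respect to the
postexpectation `f`. -/
noncomputable def Phi (φ : Set S) (μ : S → S → ℝ≥0) (f : S → ℝ≥0∞)
    (X : S → ℝ≥0∞) (s : S) : ℝ≥0∞ :=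
  if s ∈ φ then wpF μ X s else f s

theorem Phi_mono (φ : Set S) (μ : S → S → ℝ≥0) (f : S → ℝ≥0∞) :
    Monotone (Phi φ μ f) := by
  intro X Y h s
  unfold Phi wpF
  split_ifs with hs
  · exact ENNReal.tsum_le_tsum fun s' => by gcongr; exact h s'
  · exact le_rfl

/-- Least fixed point of the characteristic function `Φ_f`,
i.e. the weakest preexpectation `wp(while φ do C)(f)`. -/
noncomputable def lfpPhi (φ : Set S) (μ : S → S → ℝ≥0) (f : S → ℝ≥0∞) : S → ℝ≥0∞ :=
  OrderHom.lfp ⟨Phi φ μ f, Phi_mono φ μ f⟩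

/-- A finite expectation: `X s < ∞` for all states. -/
def FinExp (X : S → ℝ≥0∞) : Prop := ∀ s, X s < ⊤

/-- A bounded expectation: `X s ≤ c` for some constant `c : ℝ≥0`. -/
def BddExp (X : S → ℝ≥0∞) : Prop := ∃ c : ℝ≥0, ∀ s, X s ≤ (c : ℝ≥0∞)

/-- `I` harmonizes with `f` if `I` agrees with `f` on all terminal states (states
outside the guard). -/
def Harmonizes (φ : Set S) (I f : S → ℝ≥0∞) : Prop := ∀ s ∉ φ, I s = f s

/-- `ΔI`: the expected change of `I` within one loop iteration. -/
noncomputable def dExp (φ : Set S) (μ : S → S → ℝ≥0) (I : S → ℝ≥0∞) (s : S) : ℝ≥0∞ :=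
  if s ∈ φ then ∑' s', (μ s s' : ℝ≥0∞) * ((I s' - I s) ⊔ (I s - I s')) else 0

/-- `I` is conditionally difference bounded if `ΔI` is bounded by a constant. -/
def CondDiffBdd (φ : Set S) (μ : S → S → ℝ≥0) (I : S → ℝ≥0∞) : Prop :=
  ∃ c : ℝ≥0, ∀ s, dExp φ μ I s ≤ (c : ℝ≥0∞)

/-! The loop space `Ω := ℕ → S` with its product σ-algebra (`S` discrete). -/

/-- The cylinder set of a finite sequence of states. -/
def Cyl (π : List S) : Set (ℕ → S) := {ϑ | ∀ i : Fin π.length, ϑ i = π.get i}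

/-- The σ-algebra `F_n`, generated by the cylinder sets of sequences of length `n+1`. -/
def Fn (n : ℕ) : MeasurableSpace (ℕ → S) :=
  MeasurableSpace.generateFrom {A | ∃ π : List S, π.length = n + 1 ∧ A = Cyl π}

/-- The shifted filtration `G_n := F_{n+1}`. -/
def Gn (n : ℕ) : MeasurableSpace (ℕ → S) := Fn (n + 1)

/-- One-step transition probability of the loop: from a state `a` inside the guard move
according to `μ`; a state outside the guard is absorbing. -/
noncomputable def stepP (φ : Set S) (μ : S → S → ℝ≥0) (a b : S) : ℝ≥0 :=
  if a ∈ φ then μ a b else if b = a then 1 else 0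

/-- Product of the one-step transition probabilities along a finite sequence. -/
noncomputable def chainP (φ : Set S) (μ : S → S → ℝ≥0) : List S → ℝ≥0
  | [] => 1
  | [_] => 1
  | a :: b :: rest => stepP φ μ a b * chainP φ μ (b :: rest)

/-- The prefix probability `p_s(π)` of the finite sequence `π` of states, starting the
loop in the state `s`. -/
noncomputable def prefP (φ : Set S) (μ : S → S → ℝ≥0) (s : S) (π : List S) : ℝ≥0 :=
  (if π.head? = some s then 1 else 0) * chainP φ μ π

/-- The looping time `τ`: the first time the run leaves the guard. -/
noncomputable def loopT (φ : Set S) (ϑ : ℕ → S) : ℕ∞ :=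
  sInf {n : ℕ∞ | ∃ m : ℕ, n = (m : ℕ∞) ∧ ϑ m ∉ φ}

/-- The stochastic process `X_n^{f,I}` induced by the invariant `I` (w.r.t. the
postexpectation `f`). -/
noncomputable def Xn (φ : Set S) (f I : S → ℝ≥0∞) (n : ℕ) (ϑ : ℕ → S) : ℝ≥0∞ :=
  if loopT φ ϑ ≤ (n : ℕ∞) then f (ϑ (loopT φ ϑ).toNat) else I (ϑ (n + 1))

/-- The stopped process `X_τ^f`. -/
noncomputable def Xstop (φ : Set S) (f : S → ℝ≥0∞) (ϑ : ℕ → S) : ℝ≥0∞ :=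
  if loopT φ ϑ < ⊤ then f (ϑ (loopT φ ϑ).toNat) else 0

section Aux

variable {S : Type*}

lemma loopT_eq_top {φ : Set S} {ϑ : ℕ → S} (h : ∀ m, ϑ m ∈ φ) : loopT φ ϑ = ⊤ := by
  unfold loopT
  rw [show {n : ℕ∞ | ∃ m : ℕ, n = (m : ℕ∞) ∧ ϑ m ∉ φ} = ∅ from ?_, sInf_empty]
  ext n
  simp only [Set.mem_setOf_eq, Set.mem_empty_iff_false, iff_false]
  rintro ⟨m, rfl, hm⟩
  exact hm (h m)

lemma loopT_eq_coe {φ : Set S} {ϑ : ℕ → S} {m : ℕ} (h : ϑ m ∉ φ) :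
    loopT φ ϑ = ((sInf {k | ϑ k ∉ φ} : ℕ) : ℕ∞) := by
  unfold loopT
  apply le_antisymm
  · have hmem : sInf {k | ϑ k ∉ φ} ∈ {k | ϑ k ∉ φ} := Nat.sInf_mem ⟨m, h⟩
    exact sInf_le ⟨_, rfl, hmem⟩
  · refine le_sInf ?_
    rintro n ⟨k, rfl, hk⟩
    exact Nat.cast_le.mpr (Nat.sInf_le hk)

lemma Xn_of_notin {φ : Set S} {f I : S → ℝ≥0∞} {n : ℕ} {ϑ : ℕ → S} (h : ϑ 0 ∉ φ) :
    Xn φ f I n ϑ = f (ϑ 0) := by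
  have h0 : loopT φ ϑ = ((0 : ℕ) : ℕ∞) := by
    rw [loopT_eq_coe h, Nat.sInf_eq_zero.mpr (Or.inl h)]
  unfold Xn
  rw [h0]
  simp

lemma Xn_zero_of_mem {φ : Set S} {f I : S → ℝ≥0∞} {ϑ : ℕ → S} (h : ϑ 0 ∈ φ) :
    Xn φ f I 0 ϑ = I (ϑ 1) := by
  unfold Xn
  rw [if_neg]
  by_cases hM : ∀ m, ϑ m ∈ φ
  · rw [loopT_eq_top hM]
    simp
  · push_neg at hM
    obtain ⟨m, hm⟩ := hM
    rw [loopT_eq_coe hm]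
    have : sInf {k | ϑ k ∉ φ} ≠ 0 := by
      intro e
      rcases Nat.sInf_eq_zero.mp e with h0 | h0
      · exact h0 h
      · exact (Set.eq_empty_iff_forall_notMem.mp h0 m) hm
    simpa [Nat.le_zero] using this

lemma Xn_succ_of_mem {φ : Set S} {f I : S → ℝ≥0∞} {n : ℕ} {ϑ : ℕ → S} (h : ϑ 0 ∈ φ) :
    Xn φ f I (n + 1) ϑ = Xn φ f I n (fun k => ϑ (k + 1)) := by
  by_cases hM : ∀ m, ϑ m ∈ φ
  · have h1 : loopT φ ϑ = ⊤ := loopT_eq_top hM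
    have h2 : loopT φ (fun k => ϑ (k + 1)) = ⊤ := loopT_eq_top fun m => hM (m + 1)
    unfold Xn
    rw [h1, h2]
    rw [if_neg (fun hc => (ENat.coe_ne_top (n + 1)) (top_le_iff.mp hc)),
      if_neg (fun hc => (ENat.coe_ne_top n) (top_le_iff.mp hc))]
  · push_neg at hM
    obtain ⟨m, hm⟩ := hM
    have hm0 : m ≠ 0 := by intro e; rw [e] at hm; exact hm h
    set a := sInf {k | ϑ k ∉ φ} with ha
    have haM : a ∈ {k | ϑ k ∉ φ} := Nat.sInf_mem ⟨m, hm⟩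
    simp only [Set.mem_setOf_eq] at haM
    have ha0 : a ≠ 0 := by intro e; rw [e] at haM; exact haM h
    obtain ⟨b, hb⟩ : ∃ b, a = b + 1 := ⟨a - 1, (Nat.succ_pred_eq_of_ne_zero ha0).symm⟩
    have hbmem : ϑ (b + 1) ∉ φ := by rw [← hb]; exact haM
    have hs : sInf {k | ϑ (k + 1) ∉ φ} = b := by
      apply le_antisymm
      · exact Nat.sInf_le hbmem
      · have h1 : sInf {k | ϑ (k + 1) ∉ φ} ∈ {k | ϑ (k + 1) ∉ φ} := Nat.sInf_mem ⟨b, hbmem⟩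
        have h2 : a ≤ sInf {k | ϑ (k + 1) ∉ φ} + 1 := Nat.sInf_le h1
        omega
    have hL1 : loopT φ ϑ = ((b + 1 : ℕ) : ℕ∞) := by rw [loopT_eq_coe hm, ← ha, hb]
    have hL2 : loopT φ (fun k => ϑ (k + 1)) = ((b : ℕ) : ℕ∞) := by
      have := loopT_eq_coe (ϑ := fun k => ϑ (k + 1)) (m := b) hbmem
      simpa only [hs] using this
    unfold Xn
    rw [hL1, hL2]
    by_cases hbn : b ≤ n
    · rw [if_pos (by exact_mod_cast Nat.succ_le_succ hbn), if_pos (by exact_mod_cast hbn),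
        ENat.toNat_coe, ENat.toNat_coe]
    · rw [if_neg (by exact_mod_cast fun hc => hbn (Nat.succ_le_succ_iff.mp hc)),
        if_neg (by exact_mod_cast hbn)]

end Aux

section Aux2

variable {S : Type*}

/-- The value of `Xn` as a function of the first `n+2` states. -/
noncomputable def Val (φ : Set S) (f I : S → ℝ≥0∞) : (n : ℕ) → (Fin (n + 2) → S) → ℝ≥0∞
  | 0, v => if v 0 ∈ φ then I (v 1) else f (v 0)
  | n + 1, v => if v 0 ∈ φ then Val φ f I n (Fin.tail v) else f (v 0)

lemma Xn_eq_val (φ : Set S) (f I : S → ℝ≥0∞) : ∀ (n : ℕ) (ϑ : ℕ → S),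
    Xn φ f I n ϑ = Val φ f I n fun i => ϑ i
  | 0, ϑ => by
    by_cases h : ϑ 0 ∈ φ
    · rw [Xn_zero_of_mem h]
      simp [Val, h]
    · rw [Xn_of_notin h]
      simp [Val, h]
  | n + 1, ϑ => by
    by_cases h : ϑ 0 ∈ φ
    · rw [Xn_succ_of_mem h, Xn_eq_val φ f I n fun k => ϑ (k + 1)]
      simp only [Val, Fin.val_zero, h, if_true]
      congr 1

    · rw [Xn_of_notin h]
      simp [Val, h]

lemma cyl_ofFn_eq {m : ℕ} (v : Fin (m + 1) → S) :
    Cyl (List.ofFn v) = (fun ϑ : ℕ → S => fun i : Fin (m + 1) => ϑ i) ⁻¹' {v} := by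
  ext ϑ
  simp only [Cyl, Set.mem_setOf_eq, Set.mem_preimage, Set.mem_singleton_iff, funext_iff]
  constructor
  · intro h i
    have := h (Fin.cast (by simp) i)
    rw [List.get_ofFn] at this
    simpa using this
  · intro h i
    rw [List.get_ofFn]
    have := h (Fin.cast (by simp) i)
    simpa using this

lemma tsum_pi_succ {k : ℕ} (F : (Fin (k + 1) → S) → ℝ≥0∞) :
    ∑' v : Fin (k + 1) → S, F v = ∑' (a : S), ∑' (w : Fin k → S), F (Fin.cons a w) := by
  calc ∑' v : Fin (k + 1) → S, F v
      = ∑' p : S × (Fin k → S), F (Fin.cons p.1 p.2) :=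
        ((Fin.consEquiv fun _ : Fin (k + 1) => S).tsum_eq F).symm
    _ = _ := ENNReal.tsum_prod (f := fun a w => F (Fin.cons a w))

lemma head?_ofFn {k : ℕ} (v : Fin (k + 1) → S) : (List.ofFn v).head? = some (v 0) := by
  rw [List.ofFn_succ]; rfl

lemma chainP_cons_cons (φ : Set S) (μ : S → S → ℝ≥0) (a b : S) (l : List S) :
    chainP φ μ (a :: b :: l) = stepP φ μ a b * chainP φ μ (b :: l) := rfl

lemma chainP_ofFn_cons (φ : Set S) (μ : S → S → ℝ≥0) (a : S) {k : ℕ} (w : Fin (k + 1) → S) :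
    chainP φ μ (List.ofFn (Fin.cons a w)) = stepP φ μ a (w 0) * chainP φ μ (List.ofFn w) := by
  rw [List.ofFn_succ (f := Fin.cons a w)]
  simp only [Fin.cons_zero, Fin.cons_succ]
  rw [List.ofFn_succ (f := w), chainP_cons_cons, ← List.ofFn_succ (f := w)]

end Aux2

section Aux3

variable {S : Type*}

lemma wpF_iSup [Countable S] [MeasurableSpace S] [DiscreteMeasurableSpace S]
    (μ : S → S → ℝ≥0) {X : ℕ → S → ℝ≥0∞} (hX : Monotone X) (s : S) :
    wpF μ (fun s' => ⨆ n, X n s') s = ⨆ n, wpF μ (X n) s := by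
  unfold wpF
  have h1 : ∀ s', (μ s s' : ℝ≥0∞) * (⨆ n, X n s') = ⨆ n, (μ s s' : ℝ≥0∞) * X n s' :=
    fun s' => ENNReal.mul_iSup _ _
  calc ∑' s', (μ s s' : ℝ≥0∞) * ⨆ n, X n s'
      = ∑' s', ⨆ n, (μ s s' : ℝ≥0∞) * X n s' := tsum_congr h1
    _ = ∫⁻ s', ⨆ n, (μ s s' : ℝ≥0∞) * X n s' ∂(Measure.count) := (lintegral_count _).symm
    _ = ⨆ n, ∫⁻ s', (μ s s' : ℝ≥0∞) * X n s' ∂(Measure.count) := by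
        rw [lintegral_iSup (fun n => measurable_of_countable _)]
        intro n m hnm s'
        exact mul_le_mul_right (hX hnm s') _
    _ = ⨆ n, ∑' s', (μ s s' : ℝ≥0∞) * X n s' := by
        refine iSup_congr fun n => lintegral_count _

lemma iterate_zero_mono (φ : Set S) (μ : S → S → ℝ≥0) (f : S → ℝ≥0∞) :
    Monotone fun n => (Phi φ μ f)^[n] fun _ => 0 := by
  refine monotone_nat_of_le_succ fun n => ?_
  induction n with
  | zero => exact fun s => zero_le
  | succ n ih =>
    rw [Function.iterate_succ_apply', Function.iterate_succ_apply']
    exact Phi_mono φ μ f ih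

lemma kleene [Countable S] [MeasurableSpace S] [DiscreteMeasurableSpace S]
    (φ : Set S) (μ : S → S → ℝ≥0) (f : S → ℝ≥0∞) (s : S) :
    lfpPhi φ μ f s = ⨆ n, (Phi φ μ f)^[n] (fun _ => 0) s := by
  set Φ : (S → ℝ≥0∞) →o (S → ℝ≥0∞) := ⟨Phi φ μ f, Phi_mono φ μ f⟩ with hΦ
  set L : S → ℝ≥0∞ := fun s => ⨆ n, (Phi φ μ f)^[n] (fun _ => 0) s with hL
  have hmono := iterate_zero_mono φ μ f
  have hshift : ∀ s, L s = ⨆ n, (Phi φ μ f)^[n + 1] (fun _ => 0) s := by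
    intro s
    apply le_antisymm
    · exact iSup_le fun n => le_trans (hmono n.le_succ s) (le_iSup
        (fun n => (Phi φ μ f)^[n + 1] (fun _ => 0) s) n)
    · exact iSup_le fun n => le_iSup (fun n => (Phi φ μ f)^[n] (fun _ => 0) s) (n + 1)
  have hfix : Phi φ μ f L = L := by
    funext s
    rw [hshift s]
    by_cases h : s ∈ φ
    · have : Phi φ μ f L s = wpF μ L s := if_pos h
      rw [this, hL]
      rw [wpF_iSup μ hmono s]
      refine iSup_congr fun n => ?_
      rw [Function.iterate_succ_apply']
      exact (if_pos h).symm
    · have h1 : Phi φ μ f L s = f s := if_neg h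
      rw [h1]
      refine le_antisymm ?_ ?_
      · refine le_iSup_of_le 0 ?_
        rw [Function.iterate_succ_apply']
        exact le_of_eq (if_neg h).symm
      · refine iSup_le fun n => ?_
        rw [Function.iterate_succ_apply']
        exact le_of_eq (if_neg h)
  have h1 : lfpPhi φ μ f ≤ L := OrderHom.lfp_le Φ (le_of_eq hfix)
  have h2 : L ≤ lfpPhi φ μ f := by
    intro s'
    refine iSup_le fun n => ?_
    have : ∀ k, (Phi φ μ f)^[k] (fun _ => 0) ≤ lfpPhi φ μ f := by
      intro k
      induction k with
      | zero => exact fun t => zero_le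
      | succ k ih =>
        rw [Function.iterate_succ_apply']
        calc Phi φ μ f ((Phi φ μ f)^[k] fun _ => 0) ≤ Phi φ μ f (lfpPhi φ μ f) :=
              Phi_mono φ μ f ih
          _ = lfpPhi φ μ f := OrderHom.map_lfp Φ
    exact this n s'
  exact le_antisymm (h1 s) (h2 s)

end Aux3

section Aux4

variable {S : Type*} [Countable S] [MeasurableSpace S] [DiscreteMeasurableSpace S]

/-- The path-sum representation of the expected value of `Xn`. -/
noncomputable def pathSum (φ : Set S) (μ : S → S → ℝ≥0) (f I : S → ℝ≥0∞) (n : ℕ) (s : S) :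
    ℝ≥0∞ :=
  ∑' v : Fin (n + 2) → S, (prefP φ μ s (List.ofFn v) : ℝ≥0∞) * Val φ f I n v

lemma lintegral_Xn_eq_pathSum (φ : Set S) (μ : S → S → ℝ≥0) (P : S → Measure (ℕ → S))
    (hPC : ∀ (s : S) (π : List S), π ≠ [] → P s (Cyl π) = (prefP φ μ s π : ℝ≥0∞))
    (f I : S → ℝ≥0∞) (n : ℕ) (s : S) :
    ∫⁻ ϑ, Xn φ f I n ϑ ∂(P s) = pathSum φ μ f I n s := by
  have hr : Measurable (fun ϑ : ℕ → S => fun i : Fin (n + 2) => ϑ i) :=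
    measurable_pi_lambda _ fun i => measurable_pi_apply _
  calc ∫⁻ ϑ, Xn φ f I n ϑ ∂(P s)
      = ∫⁻ ϑ, Val φ f I n (fun i : Fin (n + 2) => ϑ i) ∂(P s) :=
        lintegral_congr fun ϑ => Xn_eq_val φ f I n ϑ
    _ = ∫⁻ v, Val φ f I n v ∂((P s).map (fun ϑ => fun i : Fin (n + 2) => ϑ i)) :=
        (lintegral_map (measurable_of_countable _) hr).symm
    _ = ∑' v : Fin (n + 2) → S, Val φ f I n v
          * ((P s).map (fun ϑ => fun i : Fin (n + 2) => ϑ i)) {v} := lintegral_countable' _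
    _ = pathSum φ μ f I n s := by
        refine tsum_congr fun v => ?_
        rw [Measure.map_apply hr (measurableSet_singleton v), ← cyl_ofFn_eq v,
          hPC s _ (by simp [List.ofFn_eq_nil_iff]), mul_comm]

lemma pathSum_collapse (φ : Set S) (μ : S → S → ℝ≥0) (f I : S → ℝ≥0∞) (n : ℕ) (s : S) :
    pathSum φ μ f I n s
      = ∑' w : Fin (n + 1) → S,
          (chainP φ μ (List.ofFn (Fin.cons s w)) : ℝ≥0∞) * Val φ f I n (Fin.cons s w) := by
  unfold pathSum
  rw [tsum_pi_succ, tsum_eq_single s]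
  · refine tsum_congr fun w => ?_
    congr 1
    unfold prefP
    rw [head?_ofFn, Fin.cons_zero]
    simp
  · intro a ha
    have hz : ∀ w : Fin (n + 1) → S,
        (prefP φ μ s (List.ofFn (Fin.cons a w)) : ℝ≥0∞) * Val φ f I n (Fin.cons a w) = 0 := by
      intro w
      unfold prefP
      rw [head?_ofFn, Fin.cons_zero]
      simp [ha]
    simp only [hz, tsum_zero]

lemma pathSum_zero_mem (φ : Set S) (μ : S → S → ℝ≥0) (f I : S → ℝ≥0∞) {s : S} (hs : s ∈ φ) :
    pathSum φ μ f I 0 s = wpF μ I s := by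
  rw [pathSum_collapse]
  have hval : ∀ w : Fin 1 → S, Val φ f I 0 (Fin.cons s w) = I (w 0) := by
    intro w
    simp [Val, hs]
  have hch : ∀ w : Fin 1 → S,
      chainP φ μ (List.ofFn (Fin.cons s w)) = μ s (w 0) := by
    intro w
    rw [chainP_ofFn_cons]
    have : List.ofFn w = [w 0] := by
      rw [List.ofFn_succ]
      simp
    rw [this]
    have : chainP φ μ [w 0] = 1 := rfl
    rw [this, mul_one]
    unfold stepP
    rw [if_pos hs]
  calc ∑' w : Fin 1 → S, (chainP φ μ (List.ofFn (Fin.cons s w)) : ℝ≥0∞)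
          * Val φ f I 0 (Fin.cons s w)
      = ∑' w : Fin 1 → S, (μ s (w 0) : ℝ≥0∞) * I (w 0) := by
        refine tsum_congr fun w => by rw [hval w, hch w]
    _ = ∑' a : S, (μ s a : ℝ≥0∞) * I a := by
        refine ((Equiv.funUnique (Fin 1) S).tsum_eq (fun a => (μ s a : ℝ≥0∞) * I a)).symm ▸ ?_
        rfl
    _ = wpF μ I s := rfl

lemma pathSum_succ_mem (φ : Set S) (μ : S → S → ℝ≥0) (f I : S → ℝ≥0∞) (n : ℕ) {s : S}
    (hs : s ∈ φ) :
    pathSum φ μ f I (n + 1) s = wpF μ (fun s' => pathSum φ μ f I n s') s := by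
  rw [pathSum_collapse]
  have hval : ∀ w : Fin (n + 2) → S, Val φ f I (n + 1) (Fin.cons s w) = Val φ f I n w := by
    intro w
    simp [Val, hs, Fin.tail_cons]
  calc ∑' w : Fin (n + 2) → S, (chainP φ μ (List.ofFn (Fin.cons s w)) : ℝ≥0∞)
          * Val φ f I (n + 1) (Fin.cons s w)
      = ∑' w : Fin (n + 2) → S, (μ s (w 0) : ℝ≥0∞)
          * ((chainP φ μ (List.ofFn w) : ℝ≥0∞) * Val φ f I n w) := by
        refine tsum_congr fun w => ?_
        rw [hval w, chainP_ofFn_cons]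
        push_cast
        have : (stepP φ μ s (w 0) : ℝ≥0∞) = (μ s (w 0) : ℝ≥0∞) := by
          unfold stepP
          rw [if_pos hs]
        rw [this, mul_assoc]
    _ = ∑' a : S, ∑' u : Fin (n + 1) → S, (μ s a : ℝ≥0∞)
          * ((chainP φ μ (List.ofFn (Fin.cons a u)) : ℝ≥0∞) * Val φ f I n (Fin.cons a u)) := by
        rw [tsum_pi_succ (fun w => (μ s (w 0) : ℝ≥0∞)
          * ((chainP φ μ (List.ofFn w) : ℝ≥0∞) * Val φ f I n w))]
        refine tsum_congr fun a => tsum_congr fun u => by rw [Fin.cons_zero]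
    _ = ∑' a : S, (μ s a : ℝ≥0∞) * pathSum φ μ f I n a := by
        refine tsum_congr fun a => ?_
        rw [ENNReal.tsum_mul_left, pathSum_collapse]
    _ = wpF μ (fun s' => pathSum φ μ f I n s') s := rfl

lemma lintegral_Xn_out (φ : Set S) (μ : S → S → ℝ≥0) (P : S → Measure (ℕ → S))
    (hP : ∀ s, IsProbabilityMeasure (P s))
    (hPC : ∀ (s : S) (π : List S), π ≠ [] → P s (Cyl π) = (prefP φ μ s π : ℝ≥0∞))
    (f I : S → ℝ≥0∞) (n : ℕ) {s : S} (hs : s ∉ φ) :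
    ∫⁻ ϑ, Xn φ f I n ϑ ∂(P s) = f s := by
  haveI := hP s
  have hA : MeasurableSet {ϑ : ℕ → S | ϑ 0 = s} := by
    have he : {ϑ : ℕ → S | ϑ 0 = s} = (fun ϑ : ℕ → S => ϑ 0) ⁻¹' {s} := rfl
    rw [he]
    exact measurable_pi_apply 0 (measurableSet_singleton s)
  have hCylA : Cyl [s] = {ϑ : ℕ → S | ϑ 0 = s} := by
    ext ϑ
    simp [Cyl, Fin.forall_fin_one]
  have h1 : P s {ϑ : ℕ → S | ϑ 0 = s} = 1 := by
    rw [← hCylA, hPC s [s] (by simp)]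
    simp [prefP, chainP]
  have hae : {ϑ : ℕ → S | ϑ 0 = s} ∈ MeasureTheory.ae (P s) := by
    rw [MeasureTheory.mem_ae_iff]
    rw [MeasureTheory.prob_compl_eq_zero_iff hA]
    exact h1
  have hcong : Xn φ f I n =ᵐ[P s] fun _ => f s := by
    refine Filter.eventuallyEq_of_mem hae fun ϑ hϑ => ?_
    have hϑ0 : ϑ 0 = s := hϑ
    rw [Xn_of_notin (by rw [hϑ0]; exact hs), hϑ0]
  rw [lintegral_congr_ae hcong, lintegral_const, measure_univ, mul_one]

lemma key_identity (φ : Set S) (μ : S → S → ℝ≥0) (P : S → Measure (ℕ → S))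
    (hP : ∀ s, IsProbabilityMeasure (P s))
    (hPC : ∀ (s : S) (π : List S), π ≠ [] → P s (Cyl π) = (prefP φ μ s π : ℝ≥0∞))
    (f I : S → ℝ≥0∞) :
    ∀ (n : ℕ) (s : S), ∫⁻ ϑ, Xn φ f I n ϑ ∂(P s) = (Phi φ μ f)^[n + 1] I s := by
  intro n
  induction n with
  | zero =>
    intro s
    by_cases hs : s ∈ φ
    · rw [lintegral_Xn_eq_pathSum φ μ P hPC, pathSum_zero_mem φ μ f I hs]
      simp only [zero_add, Function.iterate_one]
      exact (if_pos hs).symm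
    · rw [lintegral_Xn_out φ μ P hP hPC f I 0 hs]
      simp only [zero_add, Function.iterate_one]
      exact (if_neg hs).symm
  | succ n ih =>
    intro s
    by_cases hs : s ∈ φ
    · rw [lintegral_Xn_eq_pathSum φ μ P hPC, pathSum_succ_mem φ μ f I n hs]
      have h1 : (fun s' => pathSum φ μ f I n s') = fun s' => (Phi φ μ f)^[n + 1] I s' := by
        funext s'
        rw [← lintegral_Xn_eq_pathSum φ μ P hPC, ih s']
      rw [h1, Function.iterate_succ_apply' (Phi φ μ f) (n + 1) I]
      exact (if_pos hs).symm
    · rw [lintegral_Xn_out φ μ P hP hPC f I (n + 1) hs, Function.iterate_succ_apply']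
      exact (if_neg hs).symm

end Aux4

section Aux5

variable {S : Type*}

lemma Xstop_eq_iSup (φ : Set S) (f : S → ℝ≥0∞) (ϑ : ℕ → S) :
    Xstop φ f ϑ = ⨆ n, Xn φ f (fun _ => 0) n ϑ := by
  by_cases hlt : loopT φ ϑ < ⊤
  · set k := (loopT φ ϑ).toNat with hk
    have hco : loopT φ ϑ = (k : ℕ∞) := (ENat.coe_toNat hlt.ne).symm
    have h1 : Xstop φ f ϑ = f (ϑ k) := if_pos hlt
    rw [h1]
    apply le_antisymm
    · refine le_iSup_of_le k ?_
      unfold Xn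
      rw [hco, if_pos le_rfl, ENat.toNat_coe]
    · refine iSup_le fun n => ?_
      unfold Xn
      rw [hco, ENat.toNat_coe]
      split_ifs
      · exact le_rfl
      · exact zero_le
  · have htop : loopT φ ϑ = ⊤ := top_le_iff.mp (not_lt.mp hlt)
    have h1 : Xstop φ f ϑ = 0 := if_neg hlt
    rw [h1]
    refine zero_le.antisymm (iSup_le fun n => ?_)
    unfold Xn
    rw [htop, if_neg (fun hc => (ENat.coe_ne_top n) (top_le_iff.mp hc))]

lemma Xn_zero_mono (φ : Set S) (f : S → ℝ≥0∞) (ϑ : ℕ → S) :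
    Monotone fun n => Xn φ f (fun _ => 0) n ϑ := by
  intro n m hnm
  unfold Xn
  dsimp only
  by_cases hc : loopT φ ϑ ≤ (n : ℕ∞)
  · rw [if_pos hc, if_pos (hc.trans (Nat.cast_le.mpr hnm))]
  · rw [if_neg hc]
    exact zero_le

lemma lintegral_Xstop_eq [Countable S] [MeasurableSpace S] [DiscreteMeasurableSpace S]
    (φ : Set S) (μ : S → S → ℝ≥0) (P : S → Measure (ℕ → S))
    (hP : ∀ s, IsProbabilityMeasure (P s))
    (hPC : ∀ (s : S) (π : List S), π ≠ [] → P s (Cyl π) = (prefP φ μ s π : ℝ≥0∞))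
    (f : S → ℝ≥0∞) (s : S) :
    ∫⁻ ϑ, Xstop φ f ϑ ∂(P s) = lfpPhi φ μ f s := by
  have hmeas : ∀ n : ℕ, Measurable (Xn φ f (fun _ => 0) n) := by
    intro n
    have he : Xn φ f (fun _ => 0) n
        = fun ϑ => Val φ f (fun _ => 0) n (fun i : Fin (n + 2) => ϑ i) :=
      funext fun ϑ => Xn_eq_val φ f (fun _ => 0) n ϑ
    rw [he]
    exact (measurable_of_countable _).comp
      (measurable_pi_lambda _ fun i => measurable_pi_apply _)
  calc ∫⁻ ϑ, Xstop φ f ϑ ∂(P s)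
      = ∫⁻ ϑ, ⨆ n, Xn φ f (fun _ => 0) n ϑ ∂(P s) :=
        lintegral_congr fun ϑ => Xstop_eq_iSup φ f ϑ
    _ = ⨆ n, ∫⁻ ϑ, Xn φ f (fun _ => 0) n ϑ ∂(P s) :=
        lintegral_iSup hmeas fun n m hnm ϑ => Xn_zero_mono φ f ϑ hnm
    _ = ⨆ n, (Phi φ μ f)^[n + 1] (fun _ => 0) s := by
        exact iSup_congr fun n => key_identity φ μ P hP hPC f (fun _ => 0) n s
    _ = ⨆ n, (Phi φ μ f)^[n] (fun _ => 0) s := by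
        have hmono := iterate_zero_mono φ μ f
        apply le_antisymm
        · exact iSup_le fun n =>
            le_iSup (fun n => (Phi φ μ f)^[n] (fun _ => 0) s) (n + 1)
        · exact iSup_le fun n => le_trans (hmono n.le_succ s)
            (le_iSup (fun n => (Phi φ μ f)^[n + 1] (fun _ => 0) s) n)
    _ = lfpPhi φ μ f s := (kleene φ μ f s).symm

end Aux5

/-- **Uniform integrability of expectations vs. of the induced process.** If the loop is
universally almost surely terminating, then `Φ_fⁿ(I)` converges pointwise to `lfp Φ_f`
iff for every initial state `s` the expected values `E_s[X_n^{f,I}]` converge to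
`E_s[X_τ^f]`. -/
theorem uniformIntegrable_iff {S : Type*} [Countable S] [MeasurableSpace S] [DiscreteMeasurableSpace S]
    (φ : Set S) (μ : S → S → ℝ≥0) (hμ : ∀ s, ∑' s', μ s s' = 1)
    (P : S → Measure (ℕ → S)) (hP : ∀ s, IsProbabilityMeasure (P s))
    (hPC : ∀ (s : S) (π : List S), π ≠ [] → P s (Cyl π) = (prefP φ μ s π : ℝ≥0∞))
    (hAST : ∀ s, P s {ϑ | loopT φ ϑ < ⊤} = 1) (f I : S → ℝ≥0∞) :
    (∀ s : S, Tendsto (fun n => (Phi φ μ f)^[n] I s) atTop (nhds (lfpPhi φ μ f s)))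
      ↔
    (∀ s : S, Tendsto (fun n => ∫⁻ ϑ, Xn φ f I n ϑ ∂(P s)) atTop
        (nhds (∫⁻ ϑ, Xstop φ f ϑ ∂(P s)))) := by
  have hkey := key_identity φ μ P hP hPC f I
  have hstop : ∀ s : S, ∫⁻ ϑ, Xstop φ f ϑ ∂(P s) = lfpPhi φ μ f s := fun s =>
    lintegral_Xstop_eq φ μ P hP hPC f s
  constructor
  · intro h s
    have h2 : (fun n => ∫⁻ ϑ, Xn φ f I n ϑ ∂(P s))
        = fun n => (Phi φ μ f)^[n + 1] I s := funext fun n => hkey n s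
    rw [h2, hstop s]
    exact (tendsto_add_atTop_iff_nat (f := fun n => (Phi φ μ f)^[n] I s) 1).mpr (h s)
  · intro h s
    have h2 : (fun n => ∫⁻ ϑ, Xn φ f I n ϑ ∂(P s))
        = fun n => (Phi φ μ f)^[n + 1] I s := funext fun n => hkey n s
    have h3 := h s
    rw [h2, hstop s] at h3
    exact (tendsto_add_atTop_iff_nat (f := fun n => (Phi φ μ f)^[n] I s) 1).mp h3
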